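/- For p, q > 1 and x ∈ (0,1), one has arsinh_{p,q}(x) > x · ((pq + p + q·x^q)/(p(q+1)))^{-1/q}. -/

import Mathlib

open Real Set

noncomputable def arsinhpq (p q x : ℝ) : ℝ :=
  ∫ t in (0:ℝ)..x, (1 + t ^ q) ^ (-1/p)

lemma aux_deriv (c q t : ℝ) (hc : 0 < c) (hq : 1 < q) (ht : 0 ≤ t) :
    HasDerivAt (fun s : ℝ => s * (1 + c * s ^ q) ^ (-(1/q)))
      ((1 + c * t ^ q) ^ (-(1/q) - 1)) t := by
  have hq0 : q ≠ 0 := by linarith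
  have htq : 0 ≤ t ^ q := Real.rpow_nonneg ht q
  have hA : 0 < 1 + c * t ^ q := by nlinarith [mul_nonneg hc.le htq]
  have h1 : HasDerivAt (fun s : ℝ => s ^ q) (q * t ^ (q - 1)) t :=
    Real.hasDerivAt_rpow_const (Or.inr hq.le)
  have h2 : HasDerivAt (fun s : ℝ => 1 + c * s ^ q) (c * (q * t ^ (q - 1))) t :=
    (h1.const_mul c).const_add 1
  have h3 := h2.rpow_const (p := -(1/q)) (Or.inl hA.ne')
  have h4 := (hasDerivAt_id t).fun_mul h3
  refine h4.congr_deriv ?_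
  have htq2 : t * t ^ (q - 1) = t ^ q := by
    rcases eq_or_lt_of_le ht with h | h
    · rw [← h, Real.zero_rpow hq0, mul_comm, mul_zero]
    · rw [mul_comm, ← Real.rpow_add_one h.ne' (q - 1), sub_add_cancel]
  have hAeq : (1 + c * t ^ q) ^ (-(1/q)) =
      (1 + c * t ^ q) * (1 + c * t ^ q) ^ (-(1/q) - 1) := by
    have h5 := Real.rpow_add_one hA.ne' (-(1/q) - 1)
    rw [sub_add_cancel] at h5
    rw [h5]; ring
  have hkey : t * (c * (q * t ^ (q - 1)) * (-(1/q)) * (1 + c * t ^ q) ^ (-(1/q) - 1))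
      = -(c * t ^ q * (1 + c * t ^ q) ^ (-(1/q) - 1)) := by
    rw [← htq2]; field_simp
  rw [id_eq, hkey, hAeq]; ring

lemma aux_ineq (p q t : ℝ) (hp : 1 < p) (hq : 1 < q) (ht : 0 < t) :
    (1 + (q / (p * (q + 1))) * t ^ q) ^ (-(1/q) - 1) < (1 + t ^ q) ^ (-1/p) := by
  set c : ℝ := q / (p * (q + 1)) with hcdef
  have hq0 : (0:ℝ) < q := by linarith
  have hp0 : (0:ℝ) < p := by linarith
  have hc0 : 0 < c := by positivity
  have hc1 : c < 1 := by
    rw [hcdef, div_lt_one (by positivity)]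
    nlinarith
  have hu : 0 < t ^ q := Real.rpow_pos_of_pos ht q
  set u : ℝ := t ^ q with hudef
  have h1u : 0 < 1 + u := by linarith
  have hcu : 0 < 1 + c * u := by nlinarith
  -- Bernoulli
  have hbern : (1 + u) ^ c < 1 + c * u :=
    rpow_one_add_lt_one_add_mul_self (by linarith) hu.ne' hc0 hc1
  have hexp : c * (1 + 1/q) = 1/p := by
    rw [hcdef]; field_simp
  have hmain : (1 + u) ^ (1/p) < (1 + c * u) ^ (1 + 1/q) := by
    calc (1 + u) ^ (1/p) = ((1 + u) ^ c) ^ (1 + 1/q) := by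
          rw [← hexp, Real.rpow_mul h1u.le]
      _ < (1 + c * u) ^ (1 + 1/q) :=
          Real.rpow_lt_rpow (Real.rpow_nonneg h1u.le c) hbern (by positivity)
  have e1 : (1 + c * u) ^ (-(1/q) - 1) = ((1 + c * u) ^ (1 + 1/q))⁻¹ := by
    rw [← Real.rpow_neg hcu.le]; ring_nf
  have e2 : (1 + u) ^ (-1/p) = ((1 + u) ^ (1/p))⁻¹ := by
    rw [← Real.rpow_neg h1u.le]; ring_nf
  rw [e1, e2]
  exact inv_strictAnti₀ (by positivity) hmain

theorem stmt5 (p q x : ℝ) (hp : 1 < p) (hq : 1 < q) (hx : x ∈ Ioo (0:ℝ) 1) :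
    x * ((p * q + p + q * x ^ q) / (p * (q + 1))) ^ (-(1/q)) < arsinhpq p q x := by
  obtain ⟨hx0, hx1⟩ := hx
  set c : ℝ := q / (p * (q + 1)) with hcdef
  have hp0 : (0:ℝ) < p := by linarith
  have hq0 : (0:ℝ) < q := by linarith
  have hc0 : 0 < c := by positivity
  have hbase : (p * q + p + q * x ^ q) / (p * (q + 1)) = 1 + c * x ^ q := by
    rw [hcdef]; field_simp
  -- continuity of the two integrands on [0, x]
  have hcontpow : Continuous fun t : ℝ => t ^ q := by
    rw [continuous_iff_continuousAt]
    exact fun t => Real.continuousAt_rpow_const t q (Or.inr hq0.le)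
  have hpos : ∀ t ∈ Icc (0:ℝ) x, 0 < 1 + c * t ^ q ∧ 0 < 1 + t ^ q := by
    intro t htmem
    have h1 : 0 ≤ t ^ q := Real.rpow_nonneg htmem.1 q
    constructor <;> nlinarith [mul_nonneg hc0.le h1]
  have hcont1 : ContinuousOn (fun t : ℝ => (1 + c * t ^ q) ^ (-(1/q) - 1)) (Icc 0 x) :=
    ContinuousOn.rpow_const ((continuous_const.add (continuous_const.mul hcontpow)).continuousOn)
      (fun t htmem => Or.inl (hpos t htmem).1.ne')
  have hcont2 : ContinuousOn (fun t : ℝ => (1 + t ^ q) ^ (-1/p)) (Icc 0 x) :=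
    ContinuousOn.rpow_const ((continuous_const.add hcontpow).continuousOn)
      (fun t htmem => Or.inl (hpos t htmem).2.ne')
  -- FTC identity
  have hftc : ∫ t in (0:ℝ)..x, (1 + c * t ^ q) ^ (-(1/q) - 1)
      = x * (1 + c * x ^ q) ^ (-(1/q)) := by
    have := intervalIntegral.integral_eq_sub_of_hasDerivAt
      (f := fun s : ℝ => s * (1 + c * s ^ q) ^ (-(1/q)))
      (f' := fun t => (1 + c * t ^ q) ^ (-(1/q) - 1)) (a := (0:ℝ)) (b := x)
      (fun t htmem => by
        rw [uIcc_of_le hx0.le] at htmem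
        exact aux_deriv c q t hc0 hq htmem.1)
      (by
        rw [intervalIntegrable_iff_integrableOn_Icc_of_le hx0.le]
        exact hcont1.integrableOn_Icc)
    rw [this]
    simp
  -- strict integral comparison
  have hlt : ∫ t in (0:ℝ)..x, (1 + c * t ^ q) ^ (-(1/q) - 1)
      < ∫ t in (0:ℝ)..x, (1 + t ^ q) ^ (-1/p) := by
    apply intervalIntegral.integral_lt_integral_of_continuousOn_of_le_of_exists_lt hx0
      hcont1 hcont2
    · exact fun t htmem => (aux_ineq p q t hp hq htmem.1).le
    · exact ⟨x, ⟨hx0.le, le_refl x⟩, aux_ineq p q x hp hq hx0⟩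
  rw [hbase, ← hftc]
  exact hlt
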